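/- For any random variables Y(0), Y(1) with values in Fin K, φ ≥ max over 1 ≤ j ≤ K−1 and 1 ≤ m ≤ K−j of [Σ_{k=j+m−1}^{K−1} P(Y(1)=k) − Σ_{l=j}^{K−1} P(Y(0)=l) − Σ_{l=j+m}^{K−1} P(Y(0)=l) − Σ_{k=0}^{j−2} P(Y(1)=k)]. -/

import Mathlib

open MeasureTheory

lemma aux_meas {Ω : Type*} [MeasurableSpace Ω] {K : ℕ} {Y0 Y1 : Ω → Fin K}
    (hY0 : Measurable Y0) (hY1 : Measurable Y1) (s : Set (Fin K × Fin K)) :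
    MeasurableSet {ω | (Y0 ω, Y1 ω) ∈ s} :=
  (hY0.prodMk hY1) ((Set.toFinite s).measurableSet)

lemma aux_sum {Ω : Type*} [MeasurableSpace Ω] (P : Measure Ω) {K : ℕ}
    {Y : Ω → Fin K} (hY : Measurable Y) (s : Finset ℕ) :
    ∑ k ∈ s, P {ω | (Y ω : ℕ) = k} = P {ω | (Y ω : ℕ) ∈ s} := by
  rw [← measure_biUnion_finset]
  · congr 1; ext ω; simp
  · intro i _ j _ hij
    simp only [Function.onFun, Set.disjoint_left, Set.mem_setOf_eq]
    intro ω h1 h2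
    exact hij (h1.symm.trans h2)
  · intro k _
    exact hY ((Set.toFinite {x : Fin K | (x : ℕ) = k}).measurableSet)

/-- Sharp lower bound for φ of Lu et al. (2020), stated for every admissible (j, m)
(equivalent to the bound by the maximum). Outcome values are identified with ℕ. -/
theorem stmt16 {Ω : Type*} [MeasurableSpace Ω] (P : Measure Ω) [IsProbabilityMeasure P]
    {K : ℕ} (hK : 2 ≤ K) (Y0 Y1 : Ω → Fin K)
    (hY0 : Measurable Y0) (hY1 : Measurable Y1) :
    ∀ j m : ℕ, 1 ≤ j → j ≤ K - 1 → 1 ≤ m → m ≤ K - j →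
      (∑ k ∈ Finset.Icc (j + m - 1) (K - 1), (P {ω | (Y1 ω : ℕ) = k}).toReal)
        - (∑ l ∈ Finset.Icc j (K - 1), (P {ω | (Y0 ω : ℕ) = l}).toReal)
        - (∑ l ∈ Finset.Icc (j + m) (K - 1), (P {ω | (Y0 ω : ℕ) = l}).toReal)
        - (∑ k ∈ Finset.range (j - 1), (P {ω | (Y1 ω : ℕ) = k}).toReal)
      ≤ (P {ω | Y0 ω < Y1 ω}).toReal - (P {ω | Y1 ω < Y0 ω}).toReal := by
  intro j m hj hjK hm hmK
  have hKpos : 0 < K := by omega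
  -- bound on values
  have hval : ∀ ω, (Y1 ω : ℕ) ≤ K - 1 := fun ω => by
    have := (Y1 ω).isLt; omega
  have hval0 : ∀ ω, (Y0 ω : ℕ) ≤ K - 1 := fun ω => by
    have := (Y0 ω).isLt; omega
  -- rewrite sums as measures of tail events
  have hs1 : ∑ k ∈ Finset.Icc (j + m - 1) (K - 1), P {ω | (Y1 ω : ℕ) = k}
      = P {ω | j + m - 1 ≤ (Y1 ω : ℕ)} := by
    rw [aux_sum P hY1]
    congr 1; ext ω
    simp only [Set.mem_setOf_eq, Finset.mem_Icc]
    exact ⟨fun h => h.1, fun h => ⟨h, hval ω⟩⟩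
  have hs2 : ∑ l ∈ Finset.Icc j (K - 1), P {ω | (Y0 ω : ℕ) = l}
      = P {ω | j ≤ (Y0 ω : ℕ)} := by
    rw [aux_sum P hY0]
    congr 1; ext ω
    simp only [Set.mem_setOf_eq, Finset.mem_Icc]
    exact ⟨fun h => h.1, fun h => ⟨h, hval0 ω⟩⟩
  have hs3 : ∑ l ∈ Finset.Icc (j + m) (K - 1), P {ω | (Y0 ω : ℕ) = l}
      = P {ω | j + m ≤ (Y0 ω : ℕ)} := by
    rw [aux_sum P hY0]
    congr 1; ext ω
    simp only [Set.mem_setOf_eq, Finset.mem_Icc]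
    exact ⟨fun h => h.1, fun h => ⟨h, hval0 ω⟩⟩
  have hs4 : ∑ k ∈ Finset.range (j - 1), P {ω | (Y1 ω : ℕ) = k}
      = P {ω | (Y1 ω : ℕ) < j - 1} := by
    rw [aux_sum P hY1]
    congr 1; ext ω
    simp
  -- key events
  set A1 : Set Ω := {ω | j + m - 1 ≤ (Y1 ω : ℕ) ∧ (Y0 ω : ℕ) < (Y1 ω : ℕ)} with hA1
  set A2 : Set Ω := {ω | j + m - 1 ≤ (Y1 ω : ℕ) ∧ (Y0 ω : ℕ) = (Y1 ω : ℕ)} with hA2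
  set A3 : Set Ω := {ω | j + m - 1 ≤ (Y1 ω : ℕ) ∧ (Y1 ω : ℕ) < (Y0 ω : ℕ)} with hA3
  set B1 : Set Ω := {ω | (Y1 ω : ℕ) < (Y0 ω : ℕ) ∧ (Y1 ω : ℕ) < j - 1} with hB1
  set B2 : Set Ω := {ω | (Y1 ω : ℕ) < (Y0 ω : ℕ) ∧ j - 1 ≤ (Y1 ω : ℕ)} with hB2
  have hA2meas : MeasurableSet A2 :=
    aux_meas hY0 hY1 {p : Fin K × Fin K | j + m - 1 ≤ (p.2 : ℕ) ∧ (p.1 : ℕ) = (p.2 : ℕ)}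
  have hB2meas : MeasurableSet B2 :=
    aux_meas hY0 hY1 {p : Fin K × Fin K | (p.2 : ℕ) < (p.1 : ℕ) ∧ j - 1 ≤ (p.2 : ℕ)}
  -- decompositions
  have h1 : P {ω | j + m - 1 ≤ (Y1 ω : ℕ)} ≤ P A1 + (P A2 + P A3) := by
    refine le_trans (measure_mono ?_) (le_trans (measure_union_le _ _)
      (add_le_add le_rfl (measure_union_le _ _)))
    intro ω hω
    rcases lt_trichotomy ((Y0 ω : ℕ)) ((Y1 ω : ℕ)) with h | h | h
    · exact Or.inl ⟨hω, h⟩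
    · exact Or.inr (Or.inl ⟨hω, h⟩)
    · exact Or.inr (Or.inr ⟨hω, h⟩)
  have h2 : P {ω | (Y1 ω : ℕ) < (Y0 ω : ℕ)} ≤ P B1 + P B2 := by
    refine le_trans (measure_mono ?_) (measure_union_le _ _)
    intro ω hω
    rcases lt_or_ge ((Y1 ω : ℕ)) (j - 1) with h | h
    · exact Or.inl ⟨hω, h⟩
    · exact Or.inr ⟨hω, h⟩
  -- individual bounds
  have hb1 : P A1 ≤ P {ω | (Y0 ω : ℕ) < (Y1 ω : ℕ)} := measure_mono fun ω h => h.2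
  have hb3 : P A3 ≤ P {ω | j + m ≤ (Y0 ω : ℕ)} := by
    refine measure_mono fun ω h => ?_
    have := h.1; have := h.2
    simp only [Set.mem_setOf_eq]
    omega
  have hbB1 : P B1 ≤ P {ω | (Y1 ω : ℕ) < j - 1} := measure_mono fun ω h => h.2
  have hb2 : P A2 + P B2 ≤ P {ω | j ≤ (Y0 ω : ℕ)} := by
    rw [← measure_union ?_ hB2meas]
    · refine measure_mono fun ω h => ?_
      simp only [Set.mem_setOf_eq]
      rcases h with h | h
      · have := h.1; have := h.2; omega
      · have := h.1; have := h.2; omega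
    · simp only [Set.disjoint_left]
      intro ω h1 h2
      have := h1.2; have := h2.1; omega
  -- combine in ENNReal
  have key : P {ω | j + m - 1 ≤ (Y1 ω : ℕ)} + P {ω | (Y1 ω : ℕ) < (Y0 ω : ℕ)}
      ≤ P {ω | (Y0 ω : ℕ) < (Y1 ω : ℕ)} + P {ω | j ≤ (Y0 ω : ℕ)}
        + P {ω | j + m ≤ (Y0 ω : ℕ)} + P {ω | (Y1 ω : ℕ) < j - 1} := by
    calc P {ω | j + m - 1 ≤ (Y1 ω : ℕ)} + P {ω | (Y1 ω : ℕ) < (Y0 ω : ℕ)}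
        ≤ (P A1 + (P A2 + P A3)) + (P B1 + P B2) := add_le_add h1 h2
      _ = P A1 + (P A2 + P B2) + P A3 + P B1 := by ring
      _ ≤ P {ω | (Y0 ω : ℕ) < (Y1 ω : ℕ)} + P {ω | j ≤ (Y0 ω : ℕ)}
          + P {ω | j + m ≤ (Y0 ω : ℕ)} + P {ω | (Y1 ω : ℕ) < j - 1} := by
          gcongr
  -- convert to real
  have hfin : ∀ s : Set Ω, P s ≠ ⊤ := fun s => measure_ne_top P s
  have hlt : {ω | Y0 ω < Y1 ω} = {ω | (Y0 ω : ℕ) < (Y1 ω : ℕ)} := rfl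
  have hlt' : {ω | Y1 ω < Y0 ω} = {ω | (Y1 ω : ℕ) < (Y0 ω : ℕ)} := rfl
  rw [← ENNReal.toReal_sum (fun _ _ => hfin _), ← ENNReal.toReal_sum (fun _ _ => hfin _),
    ← ENNReal.toReal_sum (fun _ _ => hfin _), ← ENNReal.toReal_sum (fun _ _ => hfin _)]
  rw [hs1, hs2, hs3, hs4, hlt, hlt']
  have keyR : (P {ω | j + m - 1 ≤ (Y1 ω : ℕ)}).toReal
      + (P {ω | (Y1 ω : ℕ) < (Y0 ω : ℕ)}).toReal
      ≤ (P {ω | (Y0 ω : ℕ) < (Y1 ω : ℕ)}).toReal + (P {ω | j ≤ (Y0 ω : ℕ)}).toReal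
        + (P {ω | j + m ≤ (Y0 ω : ℕ)}).toReal + (P {ω | (Y1 ω : ℕ) < j - 1}).toReal := by
    rw [← ENNReal.toReal_add (hfin _) (hfin _), ← ENNReal.toReal_add (hfin _) (hfin _),
      ← ENNReal.toReal_add ?_ (hfin _), ← ENNReal.toReal_add ?_ (hfin _)]
    · exact ENNReal.toReal_mono (by finiteness) key
    · finiteness
    · finiteness
  linarith
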